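/- For the Kepler-related Hamiltonian H = (px²+py²+pz²)/2 + k1/r + k2/x² + k3/y² + k4/z² with r = √(x²+y²+z²), the function K_J1 = (y·pz − z·py)² + 2k3(z/y)² + 2k4(y/z)² satisfies {K_J1, H} = 0. -/

import Mathlib

noncomputable section

/-- Phase space ℝ⁶ with coordinates (x,y,z,px,py,pz). -/
abbrev Pt := Fin 6 → ℝ

/-- Standard basis vector. -/
def e (j : Fin 6) : Pt := Pi.single j 1

/-- Canonical Poisson bracket on ℝ⁶:
{F,G} = Σᵢ (∂F/∂qᵢ ∂G/∂pᵢ − ∂F/∂pᵢ ∂G/∂qᵢ). -/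
def pb (F G : Pt → ℝ) (q : Pt) : ℝ :=
    (fderiv ℝ F q (e 0)) * (fderiv ℝ G q (e 3)) - (fderiv ℝ F q (e 3)) * (fderiv ℝ G q (e 0))
  + (fderiv ℝ F q (e 1)) * (fderiv ℝ G q (e 4)) - (fderiv ℝ F q (e 4)) * (fderiv ℝ G q (e 1))
  + (fderiv ℝ F q (e 2)) * (fderiv ℝ G q (e 5)) - (fderiv ℝ F q (e 5)) * (fderiv ℝ G q (e 2))

/-- H = (px²+py²+pz²)/2 + k1/r + k2/x² + k3/y² + k4/z², r = √(x²+y²+z²). -/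
def Ham (k1 k2 k3 k4 : ℝ) (q : Pt) : ℝ :=
  (q 3 ^ 2 + q 4 ^ 2 + q 5 ^ 2) / 2 + k1 / Real.sqrt (q 0 ^ 2 + q 1 ^ 2 + q 2 ^ 2)
    + k2 / q 0 ^ 2 + k3 / q 1 ^ 2 + k4 / q 2 ^ 2

/-- K_J1 = (y pz − z py)² + 2k3 (z/y)² + 2k4 (y/z)². -/
def KJ1 (k3 k4 : ℝ) (q : Pt) : ℝ :=
  (q 1 * q 5 - q 2 * q 4) ^ 2 + 2 * k3 * (q 2 / q 1) ^ 2 + 2 * k4 * (q 1 / q 2) ^ 2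

namespace Stmt14Aux

variable {E : Type*} [NormedAddCommGroup E] [NormedSpace ℝ E]
  {f g : E → ℝ} {f' g' : E →L[ℝ] ℝ} {x : E}

lemma hinv (hg : HasFDerivAt g g' x) (hx : g x ≠ 0) :
    HasFDerivAt (fun y => (g y)⁻¹) ((-(g x ^ 2)⁻¹) • g') x :=
  (hasDerivAt_inv hx).comp_hasFDerivAt x hg

lemma hdiv (hf : HasFDerivAt f f' x) (hg : HasFDerivAt g g' x) (hx : g x ≠ 0) :
    HasFDerivAt (fun y => f y / g y)
      ((g x)⁻¹ • f' + (-(f x) * (g x ^ 2)⁻¹) • g') x := by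
  simp only [div_eq_mul_inv]
  have h := hf.mul (hinv hg hx)
  refine HasFDerivAt.congr_fderiv h ?_
  refine ContinuousLinearMap.ext fun v => ?_
  simp only [ContinuousLinearMap.add_apply, ContinuousLinearMap.smul_apply, smul_eq_mul]
  ring

lemma hpow2 (hf : HasFDerivAt f f' x) :
    HasFDerivAt (fun y => f y ^ 2) ((2 * f x) • f') x := by
  simp only [pow_two]
  have h := hf.mul hf
  refine HasFDerivAt.congr_fderiv h ?_
  refine ContinuousLinearMap.ext fun v => ?_
  simp only [ContinuousLinearMap.add_apply, ContinuousLinearMap.smul_apply, smul_eq_mul]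
  ring

lemma pr (i : Fin 6) (q : Pt) :
    HasFDerivAt (𝕜 := ℝ) (fun p : Pt => p i) (ContinuousLinearMap.proj i) q :=
  hasFDerivAt_apply i q

end Stmt14Aux

set_option maxHeartbeats 2000000 in
open Stmt14Aux ContinuousLinearMap in
theorem stmt14 (k1 k2 k3 k4 : ℝ) :
    ∀ q : Pt, q 0 ≠ 0 → q 1 ≠ 0 → q 2 ≠ 0 →
      pb (KJ1 k3 k4) (Ham k1 k2 k3 k4) q = 0 := by
  intro q h0 h1 h2
  have hs : (0:ℝ) < q 0 ^ 2 + q 1 ^ 2 + q 2 ^ 2 := by positivity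
  have hr : Real.sqrt (q 0 ^ 2 + q 1 ^ 2 + q 2 ^ 2) ≠ 0 := by
    exact ne_of_gt (Real.sqrt_pos.mpr hs)
  have h02 : q 0 ^ 2 ≠ 0 := pow_ne_zero _ h0
  have h12 : q 1 ^ 2 ≠ 0 := pow_ne_zero _ h1
  have h22 : q 2 ^ 2 ≠ 0 := pow_ne_zero _ h2
  have hK : HasFDerivAt (KJ1 k3 k4) _ q :=
    (((hpow2 ((pr 1 q).mul (pr 5 q) |>.sub
        ((pr 2 q).mul (pr 4 q)))).add
      ((hpow2 (hdiv (pr 2 q) (pr 1 q) h1)).const_mul (2 * k3))).add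
      ((hpow2 (hdiv (pr 1 q) (pr 2 q) h2)).const_mul (2 * k4)))
  have hH : HasFDerivAt (Ham k1 k2 k3 k4) _ q :=
    (((((hdiv (((hpow2 (pr 3 q)).add (hpow2 (pr 4 q))).add
          (hpow2 (pr 5 q))) (hasFDerivAt_const 2 q) two_ne_zero).add
        (hdiv (hasFDerivAt_const k1 q)
          (HasFDerivAt.sqrt (((hpow2 (pr 0 q)).add
            (hpow2 (pr 1 q))).add (hpow2 (pr 2 q))) (ne_of_gt hs))
          hr)).add
        (hdiv (hasFDerivAt_const k2 q) (hpow2 (pr 0 q)) h02)).add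
        (hdiv (hasFDerivAt_const k3 q) (hpow2 (pr 1 q)) h12)).add
        (hdiv (hasFDerivAt_const k4 q) (hpow2 (pr 2 q)) h22))
  unfold pb
  rw [hK.fderiv, hH.fderiv]
  simp only [ContinuousLinearMap.add_apply, ContinuousLinearMap.sub_apply,
    ContinuousLinearMap.smul_apply, ContinuousLinearMap.proj_apply, smul_eq_mul,
    ContinuousLinearMap.zero_apply, e, Pi.single_apply]
  simp (config := { decide := true }) only [Pi.single_apply, if_true, if_false]
  norm_num
  set r := Real.sqrt (q 0 ^ 2 + q 1 ^ 2 + q 2 ^ 2) with hrdef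
  field_simp
  ring
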